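/- Let $A$ be a unital complex Banach $\star$-algebra, $X$ a complex Banach space, and $\phi : A \times A \to X$ a continuous bilinear map such that $\phi(a, b^\star) = \phi(1, 1)$ whenever $a b^\star = 1$. Then $\phi(a, b) + \phi(b, a) = \phi(ab + ba, 1)$ for all $a, b \in A$. -/

import Mathlib

open scoped Topology

section
variable {A X : Type*} [NormedRing A] [NormedAlgebra ℂ A] [CompleteSpace A]
    [NormedAddCommGroup X] [NormedSpace ℂ X]

lemma invPathDeriv {w : ℂ → A} {w' : A} (hw : HasDerivAt w w' 0) (hu : IsUnit (w 0)) :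
    HasDerivAt (fun t => Ring.inverse (w t))
      (-(Ring.inverse (w 0) * w' * Ring.inverse (w 0))) 0 := by
  obtain ⟨u, hu⟩ := hu
  have h2 : HasFDerivAt Ring.inverse
      (-((ContinuousLinearMap.mulLeftRight ℂ A) ↑u⁻¹) ↑u⁻¹) (w 0) := hu ▸ hasFDerivAt_ringInverse u
  have := h2.comp_hasDerivAt 0 hw
  simpa [← hu, Ring.inverse_unit, ContinuousLinearMap.mulLeftRight_apply, Function.comp_def] using this

variable (φ : A →L[ℂ] A →L[ℂ] X)
  (h1 : ∀ v : A, IsUnit v → φ v (Ring.inverse v) = φ 1 1)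

include h1 in
lemma key1 (a v : A) (hv : IsUnit v) :
    φ a (Ring.inverse v) = φ v (Ring.inverse v * a * Ring.inverse v) := by
  set w : ℂ → A := fun t => v + t • a with hwdef
  have hw0 : w 0 = v := by simp [hwdef]
  have hw : HasDerivAt w a 0 := by
    simpa [hwdef] using (((hasDerivAt_id (0:ℂ)).smul_const a).const_add v)
  have hev : ∀ᶠ t in 𝓝 (0:ℂ), IsUnit (w t) :=
    hw.continuousAt.eventually_mem (Units.isOpen.mem_nhds (hw0 ▸ hv))
  have hconst : (fun t => φ (w t) (Ring.inverse (w t))) =ᶠ[𝓝 (0:ℂ)] fun _ => φ 1 1 :=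
    hev.mono fun t ht => h1 _ ht
  have hzero : HasDerivAt (fun t => φ (w t) (Ring.inverse (w t))) 0 0 :=
    (hasDerivAt_const (0:ℂ) (φ 1 1)).congr_of_eventuallyEq hconst
  have hc : HasDerivAt (fun t => φ (w t)) (φ a) 0 :=
    φ.hasFDerivAt.comp_hasDerivAt 0 hw
  have hD : HasDerivAt (fun t => φ (w t) (Ring.inverse (w t)))
      (φ a (Ring.inverse (w 0)) +
        φ (w 0) (-(Ring.inverse (w 0) * a * Ring.inverse (w 0)))) 0 := by
    have := hc.clm_apply (invPathDeriv hw (hw0 ▸ hv))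
    simpa using this
  have := hzero.unique hD
  rw [hw0, map_neg, eq_comm, add_neg_eq_zero] at this
  exact this
end

section
variable {A X : Type*} [NormedRing A] [NormedAlgebra ℂ A] [CompleteSpace A]
    [NormedAddCommGroup X] [NormedSpace ℂ X]
    (φ : A →L[ℂ] A →L[ℂ] X)
    (h1 : ∀ v : A, IsUnit v → φ v (Ring.inverse v) = φ 1 1)

include h1 in
lemma key2 (a b : A) : φ a b + φ b a = φ 1 (a * b + b * a) := by
  set w : ℂ → A := fun s => 1 + s • b with hwdef
  have hw0 : w 0 = 1 := by simp [hwdef]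
  have hw : HasDerivAt w b 0 := by
    simpa [hwdef] using (((hasDerivAt_id (0:ℂ)).smul_const b).const_add 1)
  have hu1 : IsUnit (w 0) := hw0 ▸ isUnit_one
  have hinv : HasDerivAt (fun s => Ring.inverse (w s)) (-b) 0 := by
    simpa [hw0] using invPathDeriv hw hu1
  have hev : ∀ᶠ s in 𝓝 (0:ℂ), IsUnit (w s) :=
    hw.continuousAt.eventually_mem (Units.isOpen.mem_nhds hu1)
  -- F s = φ a (inv (w s)), G s = φ (w s) (inv * a * inv)
  have heq : (fun s => φ a (Ring.inverse (w s))) =ᶠ[𝓝 (0:ℂ)]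
      fun s => φ (w s) (Ring.inverse (w s) * a * Ring.inverse (w s)) :=
    hev.mono fun s hs => key1 φ h1 a (w s) hs
  have hF : HasDerivAt (fun s => φ a (Ring.inverse (w s))) (φ a (-b)) 0 :=
    (φ a).hasFDerivAt.comp_hasDerivAt 0 hinv
  have hc : HasDerivAt (fun s => φ (w s)) (φ b) 0 :=
    φ.hasFDerivAt.comp_hasDerivAt 0 hw
  have hu : HasDerivAt (fun s => Ring.inverse (w s) * a * Ring.inverse (w s))
      (-(b * a) + -(a * b)) 0 := by
    have := (hinv.mul (hasDerivAt_const (0:ℂ) a)).mul hinv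
    simpa [hw0, mul_assoc, Pi.mul_def] using this
  have hG : HasDerivAt (fun s => φ (w s) (Ring.inverse (w s) * a * Ring.inverse (w s)))
      (φ b a + φ 1 (-(b * a) + -(a * b))) 0 := by
    have := hc.clm_apply hu
    simpa [hw0] using this
  have := hF.unique (hG.congr_of_eventuallyEq heq)
  simp only [map_neg, map_add] at this ⊢
  rw [neg_eq_iff_add_eq_zero] at this
  refine eq_of_sub_eq_zero ?_
  calc (φ a b + φ b a) - (φ 1 (a*b) + φ 1 (b*a))
      = φ a b + (φ b a + (-(φ 1 (b*a)) + -(φ 1 (a*b)))) := by abel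
    _ = 0 := this

include h1 in
lemma key3 (b c : A) : φ (b * c) 1 - φ c b = φ b c - φ 1 (c * b) := by
  set w : ℂ → A := fun s => 1 + s • b with hwdef
  have hw0 : w 0 = 1 := by simp [hwdef]
  have hw : HasDerivAt w b 0 := by
    simpa [hwdef] using (((hasDerivAt_id (0:ℂ)).smul_const b).const_add 1)
  have hu1 : IsUnit (w 0) := hw0 ▸ isUnit_one
  have hinv : HasDerivAt (fun s => Ring.inverse (w s)) (-b) 0 := by
    simpa [hw0] using invPathDeriv hw hu1
  have hev : ∀ᶠ s in 𝓝 (0:ℂ), IsUnit (w s) :=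
    hw.continuousAt.eventually_mem (Units.isOpen.mem_nhds hu1)
  have heq : (fun s => φ (w s * c) (Ring.inverse (w s))) =ᶠ[𝓝 (0:ℂ)]
      fun s => φ (w s) (c * Ring.inverse (w s)) := by
    refine hev.mono fun s hs => ?_
    have := key1 φ h1 (w s * c) (w s) hs
    rwa [show Ring.inverse (w s) * (w s * c) * Ring.inverse (w s)
        = c * Ring.inverse (w s) by
      rw [← mul_assoc, Ring.inverse_mul_cancel _ hs, one_mul]] at this
  have hcF : HasDerivAt (fun s => φ (w s * c)) (φ (b * c)) 0 := by
    exact φ.hasFDerivAt.comp_hasDerivAt 0 (hw.mul_const c)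
  have hF : HasDerivAt (fun s => φ (w s * c) (Ring.inverse (w s)))
      (φ (b * c) 1 + φ c (-b)) 0 := by
    have := hcF.clm_apply hinv
    simpa [hw0] using this
  have hcG : HasDerivAt (fun s => φ (w s)) (φ b) 0 :=
    φ.hasFDerivAt.comp_hasDerivAt 0 hw
  have huG : HasDerivAt (fun s => c * Ring.inverse (w s)) (-(c * b)) 0 := by
    have := (hasDerivAt_const (0:ℂ) c).mul hinv
    simpa [hw0, Pi.mul_def] using this
  have hG : HasDerivAt (fun s => φ (w s) (c * Ring.inverse (w s)))
      (φ b c + φ 1 (-(c * b))) 0 := by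
    have := hcG.clm_apply huG
    simpa [hw0] using this
  have := hF.unique (hG.congr_of_eventuallyEq heq)
  simp only [map_neg] at this
  rw [sub_eq_add_neg, sub_eq_add_neg]
  exact this

end


theorem stmt_7 (A X : Type*) [NormedRing A] [NormedAlgebra ℂ A] [CompleteSpace A]
    [StarRing A] [StarModule ℂ A] [ContinuousStar A]
    [NormedAddCommGroup X] [NormedSpace ℂ X] [CompleteSpace X]
    (φ : A →L[ℂ] A →L[ℂ] X)
    (h : ∀ a b : A, a * star b = 1 → φ a (star b) = φ 1 1) :
    ∀ a b : A, φ a b + φ b a = φ (a * b + b * a) 1 := by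
  have h1 : ∀ v : A, IsUnit v → φ v (Ring.inverse v) = φ 1 1 := by
    intro v hv
    have := h v (star (Ring.inverse v))
      (by rw [star_star]; exact Ring.mul_inverse_cancel v hv)
    rwa [star_star] at this
  have eprod : ∀ b c : A, φ (b * c) 1 = φ 1 (b * c) := by
    intro b c
    have h2 := key2 φ h1 c b
    have h3 := key3 φ h1 b c
    rw [map_add] at h2
    refine eq_of_sub_eq_zero ?_
    calc φ (b*c) 1 - φ 1 (b*c)
        = (φ b c - φ 1 (c*b) + φ c b) - φ 1 (b*c) := by rw [sub_eq_iff_eq_add.mp h3]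
      _ = (φ c b + φ b c) - (φ 1 (c*b) + φ 1 (b*c)) := by abel
      _ = 0 := by rw [h2]; abel
  intro a b
  have h2 := key2 φ h1 a b
  have : φ (a * b + b * a) 1 = φ 1 (a * b + b * a) := by
    simp only [map_add, ContinuousLinearMap.add_apply, eprod a b, eprod b a]
  rw [this]
  exact h2
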